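/- Let n ≥ 3 and ν ≥ 1 be integers, set Γ = (2ν−1)², and let a be a real number with a ≥ Γ. Then the identity ((a−Γ)/a)·( ∑_{k=1}^{n−2} C(n−2, k)·(1/a)^{k}·(1−1/a)^{n−2−k}·(1/(k+1)) + ∑_{k=1}^{n−2} C(n−2, k)·((Γ−1)/a)^{k}·((a−Γ)/a)^{n−2−k} ) = ((a−Γ)/(n−1))·(1 − (1−1/a)^{n−1}) − (1 − Γ/a)^{n−1} holds. -/

import Mathlib

lemma aux_binom (N : ℕ) (p q : ℝ) :
    ∑ k ∈ Finset.range (N + 1), (N.choose k : ℝ) * p ^ k * q ^ (N - k)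
      = (p + q) ^ N := by
  rw [add_pow]
  exact Finset.sum_congr rfl fun k _ => by ring

lemma aux_inv (N : ℕ) (x y : ℝ) (hx : x ≠ 0) :
    ∑ k ∈ Finset.range (N + 1),
        (N.choose k : ℝ) * x ^ k * y ^ (N - k) * (1 / ((k : ℝ) + 1))
      = ((x + y) ^ (N + 1) - y ^ (N + 1)) / (((N : ℝ) + 1) * x) := by
  have hNx : ((N : ℝ) + 1) * x ≠ 0 := mul_ne_zero (by positivity) hx
  rw [eq_div_iff hNx, Finset.sum_mul]
  have hpow := add_pow x y (N + 1)
  rw [Finset.sum_range_succ'] at hpow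
  have h0 : x ^ 0 * y ^ (N + 1 - 0) * ((N + 1).choose 0 : ℝ) = y ^ (N + 1) := by
    simp
  rw [h0] at hpow
  rw [hpow, add_sub_cancel_right]

  refine Finset.sum_congr rfl fun k _ => ?_
  have hc : ((N + 1 : ℕ) : ℝ) * (N.choose k : ℝ) = ((N + 1).choose (k + 1) : ℝ) * ((k : ℝ) + 1) := by
    have := Nat.add_one_mul_choose_eq N k
    have h2 : ((N.succ * N.choose k : ℕ) : ℝ) = (((N + 1).choose (k + 1) * (k + 1) : ℕ) : ℝ) := by
      exact_mod_cast congrArg (Nat.cast (R := ℝ)) this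
    push_cast at h2
    push_cast
    linarith
  have hk1 : ((k : ℝ) + 1) ≠ 0 := by positivity
  have hsub : N + 1 - (k + 1) = N - k := by omega
  rw [hsub]
  have h3 : (N.choose k : ℝ) * x ^ k * y ^ (N - k) * (1 / ((k : ℝ) + 1)) *
      (((N : ℝ) + 1) * x)
      = ((N + 1 : ℕ) : ℝ) * (N.choose k : ℝ) * (x ^ (k + 1) * y ^ (N - k)) *
        (1 / ((k : ℝ) + 1)) := by push_cast; ring
  rw [h3, hc]
  field_simp

/-- For n ≥ 3, ν ≥ 1, Γ = (2ν−1)² and a ≥ Γ (a = m² in the MANET model),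
((a−Γ)/a)·( ∑_{k=1}^{n−2} C(n−2,k)·(1/a)^k·(1−1/a)^{n−2−k}·(1/(k+1))
           + ∑_{k=1}^{n−2} C(n−2,k)·((Γ−1)/a)^k·((a−Γ)/a)^{n−2−k} )
  = ((a−Γ)/(n−1))·(1 − (1−1/a)^{n−1}) − (1 − Γ/a)^{n−1}. -/
theorem stmt_18 (n ν : ℕ) (hn : 3 ≤ n) (hν : 1 ≤ ν) (a : ℝ)
    (ha : ((((2 * ν - 1) ^ 2 : ℕ)) : ℝ) ≤ a) :
    ((a - (((2 * ν - 1) ^ 2 : ℕ) : ℝ)) / a) *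
        ((∑ k ∈ Finset.Icc 1 (n - 2),
            ((n - 2).choose k : ℝ) * (1 / a) ^ k * (1 - 1 / a) ^ (n - 2 - k) *
              (1 / ((k : ℝ) + 1))) +
          ∑ k ∈ Finset.Icc 1 (n - 2),
            ((n - 2).choose k : ℝ) * (((((2 * ν - 1) ^ 2 : ℕ) : ℝ) - 1) / a) ^ k *
              ((a - (((2 * ν - 1) ^ 2 : ℕ) : ℝ)) / a) ^ (n - 2 - k)) =
      ((a - (((2 * ν - 1) ^ 2 : ℕ) : ℝ)) / ((n : ℝ) - 1)) *
          (1 - (1 - 1 / a) ^ (n - 1)) -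
        (1 - (((2 * ν - 1) ^ 2 : ℕ) : ℝ) / a) ^ (n - 1) := by
  set G : ℝ := (((2 * ν - 1) ^ 2 : ℕ) : ℝ) with hG
  have hG1 : (1 : ℝ) ≤ G := by
    have h : 1 ≤ (2 * ν - 1) ^ 2 := by
      have : 1 ≤ 2 * ν - 1 := by omega
      nlinarith
    rw [hG]
    exact_mod_cast h
  have ha0 : 0 < a := lt_of_lt_of_le (by linarith) ha
  have haz : a ≠ 0 := ne_of_gt ha0
  obtain ⟨N, hN⟩ : ∃ N, n = N + 2 := ⟨n - 2, by omega⟩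
  subst hN
  have h2 : N + 2 - 2 = N := by omega
  have h1 : N + 2 - 1 = N + 1 := by omega
  rw [h2, h1]
  have hcast : ((N + 2 : ℕ) : ℝ) - 1 = (N : ℝ) + 1 := by push_cast; ring
  rw [hcast]
  -- convert Icc sums to range sums
  have hins : Finset.range (N + 1) = insert 0 (Finset.Icc 1 N) := by
    ext k; simp [Nat.lt_succ_iff]; omega
  have h0not : 0 ∉ Finset.Icc 1 N := by simp
  have hS1 : ∑ k ∈ Finset.Icc 1 N,
      (N.choose k : ℝ) * (1 / a) ^ k * (1 - 1 / a) ^ (N - k) * (1 / ((k : ℝ) + 1))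
      = (((1 / a) + (1 - 1 / a)) ^ (N + 1) - (1 - 1 / a) ^ (N + 1)) /
          (((N : ℝ) + 1) * (1 / a)) - (1 - 1 / a) ^ N := by
    rw [← aux_inv N (1 / a) (1 - 1 / a) (by positivity), hins, Finset.sum_insert h0not]
    simp
  have hS2 : ∑ k ∈ Finset.Icc 1 N,
      (N.choose k : ℝ) * ((G - 1) / a) ^ k * ((a - G) / a) ^ (N - k)
      = ((G - 1) / a + (a - G) / a) ^ N - ((a - G) / a) ^ N := by
    rw [← aux_binom N ((G - 1) / a) ((a - G) / a), hins, Finset.sum_insert h0not]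
    simp
  rw [hS1, hS2]
  have hxy : (1 / a) + (1 - 1 / a) = 1 := by ring
  have hpq : (G - 1) / a + (a - G) / a = 1 - 1 / a := by field_simp; ring
  rw [hxy, hpq]
  have hGa : 1 - G / a = (a - G) / a := by field_simp
  rw [hGa]
  have hN1 : ((N : ℝ) + 1) ≠ 0 := by positivity
  have hq : ((a - G) / a) ^ (N + 1) = ((a - G) / a) * ((a - G) / a) ^ N := by ring
  rw [hq]
  field_simp
  ring
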